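/- Let P^C be a representable pseudo-tensor structure on a DG category C. For composable surjections of finite sets K →π' J →π I (with J_i = π^{-1}(i), K_j = π'^{-1}(j), K_i = (ππ')^{-1}(i), and π'_i := π'|_{K_i}: K_i ↠ J_i), the diagram ε_π ∘ ε_{π'} = (⊗_{i∈I} ε_{π'_i}) ∘ ε_{ππ'} commutes as morphisms ⊗_{k∈K}X_k → ⊗_{i∈I}(⊗_{j∈J_i}(⊗_{k∈K_j}X_k)) in H^0C. -/

import Mathlib

/-! # Preamble: pseudo-tensor structures on DG categories

A DG category `C` together with a pseudo-tensor structure is formalized as a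
`PTData` (the data) satisfying `PTAxioms` (the axioms).  Following
Beilinson–Drinfeld, the Hom-complexes of the underlying DG category are the
complexes `P_1({X},Y)^*`, operations `P_I({X_i},Y)^*` are indexed by families
`Fin k → Obj` (`k = |I|`), and composition is along surjections of finite sets
`π : Fin p → Fin l`, the fibers `J_i = π⁻¹(i)` being enumerated monotonically
by `fiberEmb`. -/

universe u v

open Finset

/-- The fiber of `π : Fin p → Fin l` over `i` as a finite set. -/
def fiberSet {p l : ℕ} (π : Fin p → Fin l) (i : Fin l) : Finset (Fin p) :=
  Finset.univ.filter (fun j => π j = i)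

/-- The cardinality of the fiber of `π` over `i`. -/
def fiberCard {p l : ℕ} (π : Fin p → Fin l) (i : Fin l) : ℕ :=
  (fiberSet π i).card

/-- The monotone enumeration of the fiber of `π` over `i`. -/
def fiberEmb {p l : ℕ} (π : Fin p → Fin l) (i : Fin l)
    (a : Fin (fiberCard π i)) : Fin p :=
  ((fiberSet π i).orderIsoOfFin rfl a : Fin p)

lemma fiberEmb_mem {p l : ℕ} (π : Fin p → Fin l) (i : Fin l)
    (a : Fin (fiberCard π i)) : π (fiberEmb π i a) = i := by
  have h := ((fiberSet π i).orderIsoOfFin rfl a).2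
  unfold fiberSet at h
  rw [Finset.mem_filter] at h
  exact h.2

/-- For a composable pair `π ∘ π'`, the induced map between the fibers of
`π ∘ π'` over `i` and the fiber of `π` over `i`. -/
def fiberMap {l p q : ℕ} (π : Fin p → Fin l) (π' : Fin q → Fin p) (i : Fin l)
    (a : Fin (fiberCard (π ∘ π') i)) : Fin (fiberCard π i) :=
  ((fiberSet π i).orderIsoOfFin rfl).symm
    ⟨π' (fiberEmb (π ∘ π') i a), by
      simp only [fiberSet, Finset.mem_filter, Finset.mem_univ, true_and]
      exact fiberEmb_mem (π ∘ π') i a⟩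

lemma fiberMap_surjective {l p q : ℕ} (π : Fin p → Fin l) (π' : Fin q → Fin p)
    (hπ' : Function.Surjective π') (i : Fin l) :
    Function.Surjective (fiberMap π π' i) := by
  intro b
  obtain ⟨c, hc⟩ := hπ' (fiberEmb π i b)
  have hcmem : c ∈ fiberSet (π ∘ π') i := by
    simp only [fiberSet, Finset.mem_filter, Finset.mem_univ, true_and,
      Function.comp_apply, hc]
    exact fiberEmb_mem π i b
  refine ⟨((fiberSet (π ∘ π') i).orderIsoOfFin rfl).symm ⟨c, hcmem⟩, ?_⟩
  have h1 : fiberEmb (π ∘ π') i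
      (((fiberSet (π ∘ π') i).orderIsoOfFin rfl).symm ⟨c, hcmem⟩) = c := by
    simp [fiberEmb]
  have h2 : (⟨π' (fiberEmb (π ∘ π') i
        (((fiberSet (π ∘ π') i).orderIsoOfFin rfl).symm ⟨c, hcmem⟩)), by
      simp only [fiberSet, Finset.mem_filter, Finset.mem_univ, true_and]
      exact fiberEmb_mem (π ∘ π') i _⟩ :
      {x // x ∈ fiberSet π i}) = (fiberSet π i).orderIsoOfFin rfl b := by
    apply Subtype.ext
    show π' (fiberEmb (π ∘ π') i _) = _
    rw [h1, hc]
    rfl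
  unfold fiberMap
  have h3 := congrArg (((fiberSet π i).orderIsoOfFin rfl).symm) h2
  exact h3.trans (OrderIso.symm_apply_apply _ b)

/-- Summation over the fibers of `π` (via their monotone enumerations)
computes the total sum. -/
lemma sum_fiberEmb {p l : ℕ} {M : Type*} [AddCommMonoid M]
    (π : Fin p → Fin l) (v : Fin p → M) :
    (∑ i, ∑ b, v (fiberEmb π i b)) = ∑ j, v j := by
  have h1 : ∀ i, (∑ b, v (fiberEmb π i b)) = ∑ x ∈ fiberSet π i, v x := by
    intro i
    rw [← Finset.sum_coe_sort (fiberSet π i) v]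
    exact Equiv.sum_comp ((fiberSet π i).orderIsoOfFin rfl).toEquiv
      (fun x => v x.1)
  simp only [h1]
  simpa [fiberSet] using Finset.sum_fiberwise (Finset.univ : Finset (Fin p)) π v

lemma fiberSet_id {p : ℕ} (i : Fin p) : fiberSet (id : Fin p → Fin p) i = {i} := by
  ext x; simp [fiberSet]

lemma fiberCard_id {p : ℕ} (i : Fin p) : fiberCard (id : Fin p → Fin p) i = 1 := by
  rw [fiberCard, fiberSet_id]; simp

lemma fiberEmb_id {p : ℕ} (i : Fin p) (a : Fin (fiberCard (id : Fin p → Fin p) i)) :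
    fiberEmb (id : Fin p → Fin p) i a = i :=
  fiberEmb_mem (id : Fin p → Fin p) i a

lemma fiberSet_const {k : ℕ} (i : Fin 1) :
    fiberSet (fun _ : Fin k => (0 : Fin 1)) i = Finset.univ := by
  apply Finset.filter_true_of_mem
  intro x _
  exact Subsingleton.elim _ _

lemma fiberCard_const {k : ℕ} (i : Fin 1) :
    fiberCard (fun _ : Fin k => (0 : Fin 1)) i = k := by
  rw [fiberCard, fiberSet_const]; simp

lemma fiberEmb_const_val {k : ℕ} (i : Fin 1)
    (a : Fin (fiberCard (fun _ : Fin k => (0 : Fin 1)) i)) :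
    ((fiberEmb (fun _ : Fin k => (0 : Fin 1)) i a : Fin k) : ℕ) = (a : ℕ) := by
  have hcard : (fiberSet (fun _ : Fin k => (0 : Fin 1)) i).card
      = fiberCard (fun _ : Fin k => (0 : Fin 1)) i := rfl
  have hk : fiberCard (fun _ : Fin k => (0 : Fin 1)) i = k := fiberCard_const i
  have huniq := Finset.orderEmbOfFin_unique
    (s := fiberSet (fun _ : Fin k => (0 : Fin 1)) i) hcard
    (f := fun b => (⟨(b : ℕ), by omega⟩ : Fin k))
    (fun x => by rw [fiberSet_const]; exact Finset.mem_univ _)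
    (fun x y hxy => by simp only [Fin.mk_lt_mk]; exact hxy)
  unfold fiberEmb
  exact (congrArg Fin.val (congrFun huniq a)).symm

lemma fiberCard_bij {p l : ℕ} (π : Fin p → Fin l) (hπ : Function.Bijective π)
    (i : Fin l) : fiberCard π i = 1 := by
  rw [fiberCard, Finset.card_eq_one]
  refine ⟨(Equiv.ofBijective π hπ).symm i, ?_⟩
  ext x
  simp only [fiberSet, Finset.mem_filter, Finset.mem_univ, true_and,
    Finset.mem_singleton]
  constructor
  · intro hx
    have : π x = π ((Equiv.ofBijective π hπ).symm i) := by
      rw [hx]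
      exact ((Equiv.ofBijective π hπ).apply_symm_apply i).symm
    exact hπ.injective this
  · intro hx
    subst hx
    exact (Equiv.ofBijective π hπ).apply_symm_apply i

/-- The data of a pseudo-tensor structure on a DG category: a class of
objects, complexes of abelian groups `P k X Y •` for every finite family
`X : Fin k → Obj` and object `Y`, with differential `pd`, composition maps
`pcomp` along surjections of finite sets, and unit elements `one`.
The Hom complexes of the underlying DG category are `Hom X Y • = P 1 {X} Y •`. -/
structure PTData : Type (max (u + 1) (v + 1)) where
  Obj : Type u
  P : ∀ (k : ℕ), (Fin k → Obj) → Obj → ℤ → Type v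
  grp : ∀ k X Y n, AddCommGroup (P k X Y n)
  pd : ∀ {k : ℕ} {X : Fin k → Obj} {Y : Obj} {n : ℤ}, P k X Y n → P k X Y (n + 1)
  pcomp : ∀ {l p : ℕ} (π : Fin p → Fin l), Function.Surjective π →
      ∀ {X : Fin p → Obj} {Y : Fin l → Obj} {Z : Obj} {m : ℤ} {n : Fin l → ℤ},
        P l Y Z m → (∀ i, P (fiberCard π i) (X ∘ fiberEmb π i) (Y i) (n i)) →
        P p X Z (m + ∑ i, n i)
  one : ∀ (E : Obj), P 1 (fun _ => E) E 0

attribute [instance] PTData.grp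

namespace PTData

variable (C : PTData.{u, v})

/-- Transport along an equality of degrees. -/
def dcast {k : ℕ} {X : Fin k → C.Obj} {Y : C.Obj} {m m' : ℤ} (h : m = m')
    (f : C.P k X Y m) : C.P k X Y m' := h ▸ f

/-- Transport along an equality of target objects. -/
def ocast {k : ℕ} {X : Fin k → C.Obj} {Y Y' : C.Obj} (h : Y = Y') {m : ℤ}
    (f : C.P k X Y m) : C.P k X Y' m := h ▸ f

/-- Transport along an equality of index sets and families. -/
def pcast {k k' : ℕ} (h : k = k') {X : Fin k → C.Obj} {X' : Fin k' → C.Obj}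
    {Y : C.Obj} {m : ℤ} (f : C.P k X Y m)
    (hX : ∀ a, X a = X' (Fin.cast h a)) : C.P k' X' Y m := by
  subst h
  have hXX : X = X' := funext fun a =>
    (hX a).trans (congrArg X' (Fin.ext (by simp)))
  exact hXX ▸ f

@[simp] lemma dcast_rfl {k : ℕ} {X : Fin k → C.Obj} {Y : C.Obj} {m : ℤ}
    (f : C.P k X Y m) : C.dcast rfl f = f := rfl

lemma dcast_add {k : ℕ} {X : Fin k → C.Obj} {Y : C.Obj} {m m' : ℤ} (h : m = m')
    (f g : C.P k X Y m) : C.dcast h (f + g) = C.dcast h f + C.dcast h g := by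
  subst h; rfl

lemma dcast_zero {k : ℕ} {X : Fin k → C.Obj} {Y : C.Obj} {m m' : ℤ} (h : m = m') :
    C.dcast h (0 : C.P k X Y m) = 0 := by subst h; rfl

lemma dcast_smul {k : ℕ} {X : Fin k → C.Obj} {Y : C.Obj} {m m' : ℤ} (h : m = m')
    (c : ℤ) (f : C.P k X Y m) : C.dcast h (c • f) = c • C.dcast h f := by
  subst h; rfl

lemma dcast_sub {k : ℕ} {X : Fin k → C.Obj} {Y : C.Obj} {m m' : ℤ} (h : m = m')
    (f g : C.P k X Y m) : C.dcast h (f - g) = C.dcast h f - C.dcast h g := by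
  subst h; rfl

lemma dcast_dcast {k : ℕ} {X : Fin k → C.Obj} {Y : C.Obj} {m m' m'' : ℤ}
    (h : m = m') (h' : m' = m'') (f : C.P k X Y m) :
    C.dcast h' (C.dcast h f) = C.dcast (h.trans h') f := by
  subst h; subst h'; rfl

lemma pcast_add {k k' : ℕ} (h : k = k') {X : Fin k → C.Obj} {X' : Fin k' → C.Obj}
    (hX : ∀ a, X a = X' (Fin.cast h a)) {Y : C.Obj} {m : ℤ}
    (f g : C.P k X Y m) :
    C.pcast h (f + g) hX = C.pcast h f hX + C.pcast h g hX := by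
  subst h
  unfold pcast
  generalize (funext fun a => (hX a).trans (congrArg X' (Fin.ext (by simp))) :
      X = X') = hXX
  subst hXX
  rfl

lemma pcast_pd {k k' : ℕ} (h : k = k') {X : Fin k → C.Obj} {X' : Fin k' → C.Obj}
    (hX : ∀ a, X a = X' (Fin.cast h a)) {Y : C.Obj} {m : ℤ} (f : C.P k X Y m) :
    C.pcast h (C.pd f) hX = C.pd (C.pcast h f hX) := by
  subst h
  unfold pcast
  generalize (funext fun a => (hX a).trans (congrArg X' (Fin.ext (by simp))) :
      X = X') = hXX
  subst hXX
  rfl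

/-- Transport a `Hom` element along an equality of source objects. -/
def hcast {X X' Y : C.Obj} (h : X = X') {m : ℤ} (f : C.P 1 (fun _ => X) Y m) :
    C.P 1 (fun _ => X') Y m := h ▸ f

/-- The Hom complexes of the underlying DG category: `Hom X Y • := P 1 {X} Y •`. -/
abbrev Hom (X Y : C.Obj) (n : ℤ) : Type v := C.P 1 (fun _ => X) Y n

/-- Composition in the underlying DG category, via the pseudo-tensor
composition along the unique surjection `Fin 1 → Fin 1`. -/
def hcomp {X Y Z : C.Obj} {m n : ℤ} (f : C.Hom Y Z m) (g : C.Hom X Y n) :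
    C.Hom X Z (m + n) :=
  C.dcast (by simp) (C.pcomp (fun _ : Fin 1 => (0 : Fin 1))
    (fun b => ⟨0, Subsingleton.elim _ _⟩) (X := fun _ => X) (m := m)
    (n := fun _ => n) f
    (fun i => C.pcast (fiberCard_bij _ ⟨fun a b _ => Subsingleton.elim a b,
      fun b => ⟨0, Subsingleton.elim _ _⟩⟩ i).symm g (fun a => rfl)))

/-- Composition of an element of `Hom A B` with an element of `P k X A`:
the module structure of `P k X •` over the DG category. -/
def act1 {k : ℕ} (hk : 0 < k) {X : Fin k → C.Obj} {A B : C.Obj} {m n : ℤ}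
    (h : C.Hom A B m) (f : C.P k X A n) : C.P k X B (m + n) :=
  C.dcast (by simp) (C.pcomp (fun _ : Fin k => (0 : Fin 1))
    (fun b => ⟨⟨0, hk⟩, Subsingleton.elim _ _⟩) (X := X) (m := m)
    (n := fun _ => n) h
    (fun i => C.pcast (fiberCard_const i).symm f
      (fun a => congrArg X (Fin.ext
        (((fiberEmb_const_val i (Fin.cast (fiberCard_const i).symm a)).trans
          (Fin.coe_cast _ a)).symm)))))

/-- Composition along the identity which acts by a morphism `e` in the slot
`i₀` and by identities in all other slots: `φ ↦ φ(id,…,e,…,id)`. -/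
def actAt {p : ℕ} {X X' : Fin p → C.Obj} {Y : C.Obj} {m d₀ : ℤ}
    (i₀ : Fin p) (e : C.Hom (X' i₀) (X i₀) d₀) (hX : ∀ i, i ≠ i₀ → X' i = X i)
    (φ : C.P p X Y m) : C.P p X' Y (m + d₀) :=
  C.dcast (by rw [Finset.sum_ite_eq' Finset.univ i₀ (fun _ => d₀)]; simp)
    (C.pcomp (id : Fin p → Fin p) Function.surjective_id (X := X') (m := m)
      (n := fun i => if i = i₀ then d₀ else 0) φ
      (fun i =>
        if h : i = i₀ then
          C.dcast (by simp [h]) (C.pcast (fiberCard_id i).symm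
            (C.ocast (congrArg X h.symm) e)
            (fun a => congrArg X'
              (((fiberEmb_id i (Fin.cast (fiberCard_id i).symm a)).trans h).symm)))
        else
          C.dcast (by simp [h]) (C.pcast (fiberCard_id i).symm
            (C.one (X i))
            (fun a => (hX i h).symm.trans (congrArg X'
              (fiberEmb_id i (Fin.cast (fiberCard_id i).symm a)).symm)))))

end PTData

namespace PTData
variable (C : PTData.{u, v})

/-- The homotopy relation on elements of the same degree. -/
def Htp {k : ℕ} {X : Fin k → C.Obj} {Y : C.Obj} {n : ℤ} (f g : C.P k X Y n) : Prop :=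
  ∃ u : C.P k X Y (n - 1), f - g = C.dcast (by ring) (C.pd u)

end PTData

/-- The axioms of a pseudo-tensor structure on a DG category: the
differentials square to zero, composition is multi-additive and a map of
complexes (Leibniz rule), composition is associative with the sign
`(-1)^{Σᵢ(Σ_{l<i}Σ_{j∈J_l} p_j)·n_i}`, and the elements `id_E = one E` are
closed and are units for composition. -/
structure PTAxioms (C : PTData.{u, v}) : Prop where
  pd_add : ∀ {k : ℕ} {X : Fin k → C.Obj} {Y : C.Obj} {n : ℤ}
      (f g : C.P k X Y n), C.pd (f + g) = C.pd f + C.pd g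
  pd_pd : ∀ {k : ℕ} {X : Fin k → C.Obj} {Y : C.Obj} {n : ℤ}
      (f : C.P k X Y n), C.pd (C.pd f) = 0
  pone_pd : ∀ (E : C.Obj), C.pd (C.one E) = 0
  pcomp_add_left : ∀ {l p : ℕ} (π : Fin p → Fin l) (hπ : Function.Surjective π)
      {X : Fin p → C.Obj} {Y : Fin l → C.Obj} {Z : C.Obj} {m : ℤ} {n : Fin l → ℤ}
      (f f' : C.P l Y Z m)
      (g : ∀ i, C.P (fiberCard π i) (X ∘ fiberEmb π i) (Y i) (n i)),
      C.pcomp π hπ (f + f') g = C.pcomp π hπ f g + C.pcomp π hπ f' g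
  pcomp_add_right : ∀ {l p : ℕ} (π : Fin p → Fin l) (hπ : Function.Surjective π)
      {X : Fin p → C.Obj} {Y : Fin l → C.Obj} {Z : C.Obj} {m : ℤ} {n : Fin l → ℤ}
      (f : C.P l Y Z m)
      (g : ∀ i, C.P (fiberCard π i) (X ∘ fiberEmb π i) (Y i) (n i))
      (i₀ : Fin l) (x y : C.P (fiberCard π i₀) (X ∘ fiberEmb π i₀) (Y i₀) (n i₀)),
      C.pcomp π hπ f (Function.update g i₀ (x + y))
        = C.pcomp π hπ f (Function.update g i₀ x)
          + C.pcomp π hπ f (Function.update g i₀ y)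
  pcomp_pd : ∀ {l p : ℕ} (π : Fin p → Fin l) (hπ : Function.Surjective π)
      {X : Fin p → C.Obj} {Y : Fin l → C.Obj} {Z : C.Obj} {m : ℤ} {n : Fin l → ℤ}
      (f : C.P l Y Z m)
      (g : ∀ i, C.P (fiberCard π i) (X ∘ fiberEmb π i) (Y i) (n i)),
      C.pd (C.pcomp π hπ f g)
        = C.dcast (by ring) (C.pcomp π hπ (C.pd f) g)
          + ∑ i : Fin l, ((Int.negOnePow (m + ∑ l' ∈ Finset.Iio i, n l') : ℤ)) •
              C.dcast (by
                  rw [Finset.sum_update_of_mem (Finset.mem_univ i),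
                    Finset.sum_eq_sum_sdiff_singleton_add (Finset.mem_univ i) n]
                  ring)
                (C.pcomp π hπ (n := Function.update n i (n i + 1)) f
                  (fun i' =>
                    if h : i' = i then
                      C.dcast (by subst h; simp) (C.pd (g i'))
                    else
                      C.dcast (Function.update_of_ne h _ _).symm (g i')))
  passoc : ∀ {l p q : ℕ} (π : Fin p → Fin l) (hπ : Function.Surjective π)
      (π' : Fin q → Fin p) (hπ' : Function.Surjective π')
      {W : Fin q → C.Obj} {X : Fin p → C.Obj} {Y : Fin l → C.Obj} {Z : C.Obj}
      {m : ℤ} {n : Fin l → ℤ} {q' : Fin p → ℤ}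
      (f : C.P l Y Z m)
      (g : ∀ i, C.P (fiberCard π i) (X ∘ fiberEmb π i) (Y i) (n i))
      (h : ∀ j, C.P (fiberCard π' j) (W ∘ fiberEmb π' j) (X j) (q' j))
      (hcard : ∀ i b, fiberCard π' (fiberEmb π i b) = fiberCard (fiberMap π π' i) b)
      (hemb : ∀ i b a, fiberEmb π' (fiberEmb π i b) a
          = fiberEmb (π ∘ π') i (fiberEmb (fiberMap π π' i) b (Fin.cast (hcard i b) a))),
      C.pcomp (π ∘ π') (hπ.comp hπ') f
        (fun i => C.pcomp (fiberMap π π' i) (fiberMap_surjective π π' hπ' i)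
          (g i)
          (fun b => C.pcast (hcard i b) (h (fiberEmb π i b))
            (fun a => congrArg W (hemb i b a))))
      = (Int.negOnePow (∑ i : Fin l,
            (∑ i' ∈ Finset.Iio i, ∑ b, q' (fiberEmb π i' b)) * n i) : ℤ) •
          C.dcast (by rw [Finset.sum_add_distrib, sum_fiberEmb π q']; ring)
            (C.pcomp π' hπ' (C.pcomp π hπ f g) h)
  pcomp_one : ∀ {p : ℕ} {X : Fin p → C.Obj} {Y : C.Obj} {m : ℤ} (f : C.P p X Y m),
      C.pcomp (id : Fin p → Fin p) Function.surjective_id (n := fun _ => 0) f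
        (fun i => C.pcast (fiberCard_id i).symm (C.one (X i))
          (fun a => congrArg X (fiberEmb_id i (Fin.cast (fiberCard_id i).symm a)).symm))
        = C.dcast (by simp) f
  pone_comp : ∀ {p : ℕ} (hp : 0 < p) {X : Fin p → C.Obj} {Y : C.Obj} {m : ℤ}
      (f : C.P p X Y m),
      C.pcomp (fun _ : Fin p => (0 : Fin 1))
        (fun b => ⟨⟨0, hp⟩, Subsingleton.elim _ _⟩) (n := fun _ => m) (C.one Y)
        (fun i => C.pcast (fiberCard_const i).symm f
          (fun a => congrArg X (Fin.ext
            (((fiberEmb_const_val i (Fin.cast (fiberCard_const i).symm a)).trans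
              (Fin.coe_cast _ a)).symm))))
        = C.dcast (by simp) f

namespace PTData

variable (C : PTData.{u, v})

lemma fiberCard_pos {p l : ℕ} (π : Fin p → Fin l) (hπ : Function.Surjective π)
    (i : Fin l) : 0 < fiberCard π i := by
  obtain ⟨j, hj⟩ := hπ i
  rw [fiberCard]
  exact Finset.card_pos.mpr ⟨j, by simp [fiberSet, hj]⟩

end PTData

/-- A representation of a pseudo-tensor structure on a DG category `C`
(= the structure of a *representable* pseudo-tensor structure):  for every
finite nonempty family `X : Fin (k+1) → Obj` an object `⊗ᵢXᵢ = tob X` and a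
universal `0`-cycle `tid X ∈ P({Xᵢ}, ⊗Xᵢ)⁰` such that composition with
`tid X` is a quasi-isomorphism `Hom(⊗Xᵢ, −)^* → P({Xᵢ}, −)^*` — this is
exactly an isomorphism `λ⁻¹ : Hom(⊗Xᵢ,−)^* → P_I({Xᵢ},−)^*` in the derived
category `D(C^op)` of `C^op`-modules, realized by an honest quasi-isomorphism
of modules out of the representable module.  For singleton families the
tensor object is `X 0` and `λ` is the identity (`tid` is `id_{X 0}`). -/
structure PTRep (C : PTData.{u, v}) where
  tob : ∀ {k : ℕ}, (Fin (k + 1) → C.Obj) → C.Obj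
  tid : ∀ {k : ℕ} (X : Fin (k + 1) → C.Obj), C.P (k + 1) X (tob X) 0
  tid_cycle : ∀ {k : ℕ} (X : Fin (k + 1) → C.Obj), C.pd (tid X) = 0
  lam_surj : ∀ {k : ℕ} (X : Fin (k + 1) → C.Obj) (Y : C.Obj) (n : ℤ)
      (f : C.P (k + 1) X Y n), C.pd f = 0 →
      ∃ h : C.Hom (tob X) Y n, C.pd h = 0 ∧
        C.Htp (C.dcast (add_zero n) (C.act1 (Nat.succ_pos k) h (tid X))) f
  lam_inj : ∀ {k : ℕ} (X : Fin (k + 1) → C.Obj) (Y : C.Obj) (n : ℤ)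
      (h h' : C.Hom (tob X) Y n), C.pd h = 0 → C.pd h' = 0 →
      C.Htp (C.dcast (add_zero n) (C.act1 (Nat.succ_pos k) h (tid X)))
        (C.dcast (add_zero n) (C.act1 (Nat.succ_pos k) h' (tid X))) →
      C.Htp h h'
  tob_one : ∀ (X : Fin 1 → C.Obj), tob X = X 0
  tid_one : ∀ (X : Fin 1 → C.Obj),
      tid X = C.pcast rfl (C.ocast (tob_one X).symm (C.one (X 0)))
        (fun a => congrArg X (Subsingleton.elim _ _))

namespace PTData

variable {C} (R : PTRep C)

/-- The tensor object of a family indexed by an arbitrary positive `Fin k`. -/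
def tobF {k : ℕ} (hk : 0 < k) (X : Fin k → C.Obj) : C.Obj :=
  R.tob (fun a : Fin (k - 1 + 1) => X (Fin.cast (Nat.succ_pred_eq_of_pos hk) a))

/-- The universal cycle for a family indexed by an arbitrary positive `Fin k`. -/
def tidF {k : ℕ} (hk : 0 < k) (X : Fin k → C.Obj) :
    C.P k X (tobF R hk X) 0 :=
  C.pcast (Nat.succ_pred_eq_of_pos hk) (R.tid _) (fun _ => rfl)

lemma tobF_congr {k k' : ℕ} (hk : 0 < k) (hk' : 0 < k') (h : k = k')
    {X : Fin k → C.Obj} {X' : Fin k' → C.Obj}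
    (hX : ∀ a, X a = X' (Fin.cast h a)) : tobF R hk X = tobF R hk' X' := by
  subst h
  have : X = X' := funext fun a => (hX a).trans (congrArg X' rfl)
  rw [this]

variable (C)

/-- The canonical element `(λ⁻¹id)((λ⁻¹id)ᵢ) ∈ P_J({X_j}, ⊗ᵢ(⊗_{j∈Jᵢ}X_j))⁰`
whose image under `λ` is the canonical morphism `ε_π`. -/
def epsElt {l p : ℕ} (hp : 0 < p) (π : Fin p → Fin l)
    (hπ : Function.Surjective π) (X : Fin p → C.Obj) :
    C.P p X
      (tobF R (Fin.pos (π ⟨0, hp⟩))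
        (fun i => tobF R (fiberCard_pos π hπ i) (X ∘ fiberEmb π i))) 0 :=
  C.dcast (by simp)
    (C.pcomp π hπ (n := fun _ => 0)
      (tidF R (Fin.pos (π ⟨0, hp⟩))
        (fun i => tobF R (fiberCard_pos π hπ i) (X ∘ fiberEmb π i)))
      (fun i => tidF R (fiberCard_pos π hπ i) (X ∘ fiberEmb π i)))

/-- `F` *is* the canonical morphism `ε_π : ⊗_{j∈J}X_j → ⊗ᵢ(⊗_{j∈Jᵢ}X_j)`
(as a morphism of `H⁰C`, characterized by `λ(F) = (λ⁻¹id)((λ⁻¹id)ᵢ)`,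
i.e. `F∘tid ∼ εElt`). -/
def IsEps {l p : ℕ} (hp : 0 < p) (π : Fin p → Fin l)
    (hπ : Function.Surjective π) (X : Fin p → C.Obj)
    (F : C.Hom (tobF R hp X)
      (tobF R (Fin.pos (π ⟨0, hp⟩))
        (fun i => tobF R (fiberCard_pos π hπ i) (X ∘ fiberEmb π i))) 0) :
    Prop :=
  C.pd F = 0 ∧
    C.Htp (C.dcast (add_zero 0) (C.act1 hp F (tidF R hp X)))
      (epsElt C R hp π hπ X)

/-- The element `(λ⁻¹ id_{⊗B})((f_i)_i) ∈ P({Aᵢ}, ⊗Bᵢ)⁰`. -/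
def tidComp {k : ℕ} (hk : 0 < k) {A B : Fin k → C.Obj}
    (fs : ∀ i, C.Hom (A i) (B i) 0) : C.P k A (tobF R hk B) 0 :=
  C.dcast (by simp)
    (C.pcomp (id : Fin k → Fin k) Function.surjective_id (n := fun _ => 0)
      (tidF R hk B)
      (fun i => C.pcast (fiberCard_id i).symm (fs i)
        (fun a => congrArg A (fiberEmb_id i (Fin.cast (fiberCard_id i).symm a)).symm)))

/-- `F` *is* the tensor product `⊗ᵢfᵢ : ⊗Aᵢ → ⊗Bᵢ` of the morphisms `fᵢ`
(in `H⁰C`, characterized through the representability isomorphisms). -/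
def IsTenMap {k : ℕ} (hk : 0 < k) {A B : Fin k → C.Obj}
    (fs : ∀ i, C.Hom (A i) (B i) 0)
    (F : C.Hom (tobF R hk A) (tobF R hk B) 0) : Prop :=
  C.pd F = 0 ∧ (∀ i, C.pd (fs i) = 0) ∧
    C.Htp (C.dcast (add_zero 0) (C.act1 hk F (tidF R hk A)))
      (tidComp C R hk fs)

end PTData

section Comb

lemma fiberEmb_strictMono {p l : ℕ} (π : Fin p → Fin l) (i : Fin l) :
    StrictMono (fiberEmb π i) := by
  intro a b h
  exact ((fiberSet π i).orderIsoOfFin rfl).strictMono h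

lemma fiberEmb_fiberMap {l p q : ℕ} (π : Fin p → Fin l) (π' : Fin q → Fin p)
    (i : Fin l) (a : Fin (fiberCard (π ∘ π') i)) :
    fiberEmb π i (fiberMap π π' i a) = π' (fiberEmb (π ∘ π') i a) := by
  unfold fiberEmb fiberMap
  rw [OrderIso.apply_symm_apply]
  rfl

lemma mem_fiberSet_comp {l p q : ℕ} (π : Fin p → Fin l) (π' : Fin q → Fin p)
    (i : Fin l) (b : Fin (fiberCard π i)) (a : Fin q)
    (ha : a ∈ fiberSet π' (fiberEmb π i b)) : a ∈ fiberSet (π ∘ π') i := by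
  simp only [fiberSet, Finset.mem_filter, Finset.mem_univ, true_and] at ha ⊢
  rw [Function.comp_apply, ha]
  exact fiberEmb_mem π i b

lemma fiberMap_fiberEmbInv {l p q : ℕ} (π : Fin p → Fin l) (π' : Fin q → Fin p)
    (i : Fin l) (b : Fin (fiberCard π i)) (a : Fin q)
    (ha : a ∈ fiberSet π' (fiberEmb π i b)) :
    fiberMap π π' i (((fiberSet (π ∘ π') i).orderIsoOfFin rfl).symm
      ⟨a, mem_fiberSet_comp π π' i b a ha⟩) = b := by
  have ha' : π' a = fiberEmb π i b := by
    have := ha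
    simp only [fiberSet, Finset.mem_filter, Finset.mem_univ, true_and] at this
    exact this
  unfold fiberMap
  have h1 : fiberEmb (π ∘ π') i (((fiberSet (π ∘ π') i).orderIsoOfFin rfl).symm
      ⟨a, mem_fiberSet_comp π π' i b a ha⟩) = a := by
    simp [fiberEmb]
  have h2 : (⟨π' (fiberEmb (π ∘ π') i (((fiberSet (π ∘ π') i).orderIsoOfFin rfl).symm
      ⟨a, mem_fiberSet_comp π π' i b a ha⟩)), by
        simp only [fiberSet, Finset.mem_filter, Finset.mem_univ, true_and]
        exact fiberEmb_mem (π ∘ π') i _⟩ : {x // x ∈ fiberSet π i})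
      = (fiberSet π i).orderIsoOfFin rfl b := by
    apply Subtype.ext
    show π' _ = _
    rw [h1, ha']
    rfl
  rw [h2]
  exact OrderIso.symm_apply_apply _ b

lemma hcard_gen {l p q : ℕ} (π : Fin p → Fin l) (π' : Fin q → Fin p)
    (i : Fin l) (b : Fin (fiberCard π i)) :
    fiberCard π' (fiberEmb π i b) = fiberCard (fiberMap π π' i) b := by
  apply Finset.card_bij
    (fun (a : Fin q) (ha : a ∈ fiberSet π' (fiberEmb π i b)) =>
      ((fiberSet (π ∘ π') i).orderIsoOfFin rfl).symm ⟨a, mem_fiberSet_comp π π' i b a ha⟩)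
  · intro a ha
    exact (Finset.mem_filter (s := Finset.univ) (p := fun j : Fin (fiberCard (π ∘ π') i) => fiberMap π π' i j = b)).mpr ⟨Finset.mem_univ _, fiberMap_fiberEmbInv π π' i b a ha⟩
  · intro a1 ha1 a2 ha2 h
    have := congrArg (((fiberSet (π ∘ π') i).orderIsoOfFin rfl)) h
    rw [OrderIso.apply_symm_apply, OrderIso.apply_symm_apply] at this
    exact congrArg Subtype.val this
  · intro c hc
    replace hc : fiberMap π π' i c = b := (Finset.mem_filter (s := Finset.univ) (p := fun j : Fin (fiberCard (π ∘ π') i) => fiberMap π π' i j = b)).mp hc |>.2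
    refine ⟨fiberEmb (π ∘ π') i c, ?_, ?_⟩
    · simp only [fiberSet, Finset.mem_filter, Finset.mem_univ, true_and]
      rw [← hc]
      exact (fiberEmb_fiberMap π π' i c).symm
    · have hm : fiberEmb (π ∘ π') i c ∈ fiberSet (π ∘ π') i :=
        (((fiberSet (π ∘ π') i).orderIsoOfFin rfl) c).2
      have : (⟨fiberEmb (π ∘ π') i c, hm⟩ : {x // x ∈ fiberSet (π ∘ π') i})
          = ((fiberSet (π ∘ π') i).orderIsoOfFin rfl) c := by
        apply Subtype.ext; rfl
      rw [this, OrderIso.symm_apply_apply]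

lemma hemb_gen {l p q : ℕ} (π : Fin p → Fin l) (π' : Fin q → Fin p)
    (i : Fin l) (b : Fin (fiberCard π i)) (a : Fin (fiberCard π' (fiberEmb π i b))) :
    fiberEmb π' (fiberEmb π i b) a
      = fiberEmb (π ∘ π') i (fiberEmb (fiberMap π π' i) b (Fin.cast (hcard_gen π π' i b) a)) := by
  have hmem : ∀ a' : Fin (fiberCard (fiberMap π π' i) b),
      fiberEmb (π ∘ π') i (fiberEmb (fiberMap π π' i) b a') ∈ fiberSet π' (fiberEmb π i b) := by
    intro a'
    simp only [fiberSet, Finset.mem_filter, Finset.mem_univ, true_and]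
    rw [← fiberEmb_fiberMap π π' i, fiberEmb_mem (fiberMap π π' i) b a']
  have hmono : StrictMono (fun a' : Fin (fiberCard π' (fiberEmb π i b)) =>
      fiberEmb (π ∘ π') i (fiberEmb (fiberMap π π' i) b (Fin.cast (hcard_gen π π' i b) a'))) := by
    intro x y hxy
    apply fiberEmb_strictMono
    apply fiberEmb_strictMono
    exact hxy
  have huniq := Finset.orderEmbOfFin_unique
    (s := fiberSet π' (fiberEmb π i b)) (rfl : (fiberSet π' (fiberEmb π i b)).card = fiberCard π' (fiberEmb π i b))
    (f := fun a' : Fin (fiberCard π' (fiberEmb π i b)) =>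
      fiberEmb (π ∘ π') i (fiberEmb (fiberMap π π' i) b (Fin.cast (hcard_gen π π' i b) a')))
    (fun a' => hmem _) hmono
  have hco : fiberEmb π' (fiberEmb π i b) a
      = (fiberSet π' (fiberEmb π i b)).orderEmbOfFin rfl a := by
    unfold fiberEmb
    exact Finset.coe_orderIsoOfFin_apply _ _ _
  exact hco.trans (congrFun huniq a).symm

end Comb
namespace PTData

variable (C : PTData.{u, v})

section CastTools

lemma heq_dcast {k : ℕ} {X : Fin k → C.Obj} {Y : C.Obj} {m m' : ℤ} (h : m = m')
    (f : C.P k X Y m) : HEq (C.dcast h f) f := by subst h; rfl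

lemma heq_ocast {k : ℕ} {X : Fin k → C.Obj} {Y Y' : C.Obj} (h : Y = Y') {m : ℤ}
    (f : C.P k X Y m) : HEq (C.ocast h f) f := by subst h; rfl

lemma heq_pcast {k k' : ℕ} (h : k = k') {X : Fin k → C.Obj} {X' : Fin k' → C.Obj}
    {Y : C.Obj} {m : ℤ} (f : C.P k X Y m) (hX : ∀ a, X a = X' (Fin.cast h a)) :
    HEq (C.pcast h f hX) f := by
  subst h
  have hXX : X = X' := funext fun a => (hX a).trans (congrArg X' (Fin.ext (by simp)))
  subst hXX
  rfl

lemma dcast_eq_of_heq {k : ℕ} {X : Fin k → C.Obj} {Y : C.Obj} {m m' : ℤ}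
    (h : m' = m) {f : C.P k X Y m} {g : C.P k X Y m'} (hh : HEq g f) :
    C.dcast h g = f := by subst h; exact eq_of_heq hh

lemma dcast_eq_dcast_of_heq {k : ℕ} {X : Fin k → C.Obj} {Y : C.Obj}
    {m₁ m₂ m : ℤ} (h : m₁ = m) (h' : m₂ = m) {f : C.P k X Y m₁}
    {g : C.P k X Y m₂} (hh : HEq f g) : C.dcast h f = C.dcast h' g := by
  subst h; subst h'; exact eq_of_heq hh

lemma ocast_eq_of_heq {k : ℕ} {X : Fin k → C.Obj} {Y Y' : C.Obj} (h : Y = Y')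
    {m : ℤ} {f : C.P k X Y m} {g : C.P k X Y' m} (hh : HEq f g) :
    C.ocast h f = g := by subst h; exact eq_of_heq hh

lemma pcomp_heq {l₁ l₂ p₁ p₂ : ℕ} (hl : l₁ = l₂) (hp : p₁ = p₂)
    {π₁ : Fin p₁ → Fin l₁} {π₂ : Fin p₂ → Fin l₂}
    (h₁ : Function.Surjective π₁) (h₂ : Function.Surjective π₂)
    (hπ : ∀ a, Fin.cast hl (π₁ a) = π₂ (Fin.cast hp a))
    {X₁ : Fin p₁ → C.Obj} {X₂ : Fin p₂ → C.Obj} (hX : ∀ a, X₁ a = X₂ (Fin.cast hp a))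
    {Y₁ : Fin l₁ → C.Obj} {Y₂ : Fin l₂ → C.Obj} (hY : ∀ i, Y₁ i = Y₂ (Fin.cast hl i))
    {Z₁ Z₂ : C.Obj} (hZ : Z₁ = Z₂) {m₁ m₂ : ℤ} (hm : m₁ = m₂)
    {n₁ : Fin l₁ → ℤ} {n₂ : Fin l₂ → ℤ} (hn : ∀ i, n₁ i = n₂ (Fin.cast hl i))
    {f₁ : C.P l₁ Y₁ Z₁ m₁} {f₂ : C.P l₂ Y₂ Z₂ m₂} (hf : HEq f₁ f₂)
    {g₁ : ∀ i, C.P (fiberCard π₁ i) (X₁ ∘ fiberEmb π₁ i) (Y₁ i) (n₁ i)}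
    {g₂ : ∀ i, C.P (fiberCard π₂ i) (X₂ ∘ fiberEmb π₂ i) (Y₂ i) (n₂ i)}
    (hg : ∀ i, HEq (g₁ i) (g₂ (Fin.cast hl i))) :
    HEq (C.pcomp π₁ h₁ f₁ g₁) (C.pcomp π₂ h₂ f₂ g₂) := by
  subst hl; subst hp; subst hm; subst hZ
  have hππ : π₁ = π₂ := funext fun a => hπ a
  subst hππ
  have hXX : X₁ = X₂ := funext fun a => hX a
  subst hXX
  have hYY : Y₁ = Y₂ := funext fun i => hY i
  subst hYY
  have hnn : n₁ = n₂ := funext fun i => hn i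
  subst hnn
  have hff : f₁ = f₂ := eq_of_heq hf
  subst hff
  have hgg : g₁ = g₂ := funext fun i => eq_of_heq (hg i)
  subst hgg
  rfl

lemma htp_congr {k₁ k₂ : ℕ} (hk : k₁ = k₂) {X₁ : Fin k₁ → C.Obj}
    {X₂ : Fin k₂ → C.Obj} (hX : ∀ a, X₁ a = X₂ (Fin.cast hk a))
    {Y₁ Y₂ : C.Obj} (hY : Y₁ = Y₂) {n₁ n₂ : ℤ} (hn : n₁ = n₂)
    {f₁ g₁ : C.P k₁ X₁ Y₁ n₁} {f₂ g₂ : C.P k₂ X₂ Y₂ n₂}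
    (hf : HEq f₁ f₂) (hg : HEq g₁ g₂) : C.Htp f₁ g₁ → C.Htp f₂ g₂ := by
  subst hk; subst hY; subst hn
  have hXX : X₁ = X₂ := funext fun a => hX a
  subst hXX
  rw [eq_of_heq hf, eq_of_heq hg]
  exact id

lemma pcomp_dcast_left {l p : ℕ} (π : Fin p → Fin l) (hπ : Function.Surjective π)
    {X : Fin p → C.Obj} {Y : Fin l → C.Obj} {Z : C.Obj} {m m' : ℤ} (h : m = m')
    {n : Fin l → ℤ} (f : C.P l Y Z m)
    (g : ∀ i, C.P (fiberCard π i) (X ∘ fiberEmb π i) (Y i) (n i)) :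
    C.pcomp π hπ (C.dcast h f) g = C.dcast (by rw [h]) (C.pcomp π hπ f g) := by
  subst h; rfl

lemma pd_dcast {k : ℕ} {X : Fin k → C.Obj} {Y : C.Obj} {m m' : ℤ} (h : m = m')
    (f : C.P k X Y m) : C.pd (C.dcast h f) = C.dcast (by rw [h]) (C.pd f) := by
  subst h; rfl

lemma pd_ocast {k : ℕ} {X : Fin k → C.Obj} {Y Y' : C.Obj} (h : Y = Y') {m : ℤ}
    (f : C.P k X Y m) : C.pd (C.ocast h f) = C.ocast h (C.pd f) := by
  subst h; rfl

lemma ocast_zero {k : ℕ} {X : Fin k → C.Obj} {Y Y' : C.Obj} (h : Y = Y') {m : ℤ} :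
    C.ocast h (0 : C.P k X Y m) = 0 := by subst h; rfl

end CastTools

section Algebra

/-- `pd` as an additive monoid hom. -/
def pdHom (A : PTAxioms C) {k : ℕ} {X : Fin k → C.Obj} {Y : C.Obj} {n : ℤ} :
    C.P k X Y n →+ C.P k X Y (n + 1) :=
  AddMonoidHom.mk' C.pd A.pd_add

lemma pd_zero (A : PTAxioms C) {k : ℕ} {X : Fin k → C.Obj} {Y : C.Obj} {n : ℤ} :
    C.pd (0 : C.P k X Y n) = 0 := (C.pdHom A).map_zero

lemma pd_neg (A : PTAxioms C) {k : ℕ} {X : Fin k → C.Obj} {Y : C.Obj} {n : ℤ} (f : C.P k X Y n) :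
    C.pd (-f) = -C.pd f := (C.pdHom A).map_neg f

lemma pd_smul (A : PTAxioms C) {k : ℕ} {X : Fin k → C.Obj} {Y : C.Obj} {n : ℤ} (c : ℤ)
    (f : C.P k X Y n) : C.pd (c • f) = c • C.pd f := (C.pdHom A).map_zsmul c f

lemma dcast_neg {k : ℕ} {X : Fin k → C.Obj} {Y : C.Obj} {m m' : ℤ} (h : m = m')
    (f : C.P k X Y m) : C.dcast h (-f) = -C.dcast h f := by subst h; rfl

lemma pcomp_zero_left (A : PTAxioms C) {l p : ℕ} (π : Fin p → Fin l) (hπ : Function.Surjective π)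
    {X : Fin p → C.Obj} {Y : Fin l → C.Obj} {Z : C.Obj} {m : ℤ} {n : Fin l → ℤ}
    (g : ∀ i, C.P (fiberCard π i) (X ∘ fiberEmb π i) (Y i) (n i)) :
    C.pcomp π hπ (0 : C.P l Y Z m) g = 0 := by
  have h := A.pcomp_add_left π hπ (0 : C.P l Y Z m) 0 g
  rw [add_zero] at h
  exact left_eq_add.mp h

lemma pcomp_sub_left (A : PTAxioms C) {l p : ℕ} (π : Fin p → Fin l) (hπ : Function.Surjective π)
    {X : Fin p → C.Obj} {Y : Fin l → C.Obj} {Z : C.Obj} {m : ℤ} {n : Fin l → ℤ}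
    (f f' : C.P l Y Z m)
    (g : ∀ i, C.P (fiberCard π i) (X ∘ fiberEmb π i) (Y i) (n i)) :
    C.pcomp π hπ (f - f') g = C.pcomp π hπ f g - C.pcomp π hπ f' g :=
  (AddMonoidHom.mk' (fun f => C.pcomp π hπ f g)
    (fun f f' => A.pcomp_add_left π hπ f f' g)).map_sub f f'

lemma pcomp_update_zero (A : PTAxioms C) {l p : ℕ} (π : Fin p → Fin l) (hπ : Function.Surjective π)
    {X : Fin p → C.Obj} {Y : Fin l → C.Obj} {Z : C.Obj} {m : ℤ} {n : Fin l → ℤ}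
    (f : C.P l Y Z m)
    (g : ∀ i, C.P (fiberCard π i) (X ∘ fiberEmb π i) (Y i) (n i)) (i₀ : Fin l) :
    C.pcomp π hπ f (Function.update g i₀ 0) = 0 := by
  have h := A.pcomp_add_right π hπ f g i₀ 0 0
  rw [add_zero] at h
  exact left_eq_add.mp h

lemma pcomp_zero_slot (A : PTAxioms C) {l p : ℕ} (π : Fin p → Fin l) (hπ : Function.Surjective π)
    {X : Fin p → C.Obj} {Y : Fin l → C.Obj} {Z : C.Obj} {m : ℤ} {n : Fin l → ℤ}
    (f : C.P l Y Z m)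
    (g : ∀ i, C.P (fiberCard π i) (X ∘ fiberEmb π i) (Y i) (n i)) (i₀ : Fin l)
    (hg : g i₀ = 0) : C.pcomp π hπ f g = 0 := by
  have hgu : g = Function.update g i₀ 0 := by
    funext j
    rcases eq_or_ne j i₀ with h | h
    · subst h; rw [Function.update_self, hg]
    · rw [Function.update_of_ne h]
  rw [hgu]
  exact C.pcomp_update_zero A π hπ f g i₀

lemma pcomp_update_sub (A : PTAxioms C) {l p : ℕ} (π : Fin p → Fin l) (hπ : Function.Surjective π)
    {X : Fin p → C.Obj} {Y : Fin l → C.Obj} {Z : C.Obj} {m : ℤ} {n : Fin l → ℤ}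
    (f : C.P l Y Z m)
    (g : ∀ i, C.P (fiberCard π i) (X ∘ fiberEmb π i) (Y i) (n i)) (i₀ : Fin l)
    (x y : C.P (fiberCard π i₀) (X ∘ fiberEmb π i₀) (Y i₀) (n i₀)) :
    C.pcomp π hπ f (Function.update g i₀ (x - y))
      = C.pcomp π hπ f (Function.update g i₀ x)
        - C.pcomp π hπ f (Function.update g i₀ y) :=
  (AddMonoidHom.mk' (fun x => C.pcomp π hπ f (Function.update g i₀ x))
    (fun x y => A.pcomp_add_right π hπ f g i₀ x y)).map_sub x y

end Algebra

end PTData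
namespace PTData

variable (C : PTData.{u, v})

section HtpBasic

lemma htp_refl (A : PTAxioms C) {k : ℕ} {X : Fin k → C.Obj} {Y : C.Obj} {n : ℤ}
    (f : C.P k X Y n) : C.Htp f f :=
  ⟨0, by rw [sub_self, C.pd_zero A, C.dcast_zero]⟩

lemma htp_symm (A : PTAxioms C) {k : ℕ} {X : Fin k → C.Obj} {Y : C.Obj} {n : ℤ}
    {f g : C.P k X Y n} (h : C.Htp f g) : C.Htp g f := by
  obtain ⟨u, hu⟩ := h
  exact ⟨-u, by rw [C.pd_neg A, C.dcast_neg, ← hu, neg_sub]⟩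

lemma htp_trans (A : PTAxioms C) {k : ℕ} {X : Fin k → C.Obj} {Y : C.Obj} {n : ℤ}
    {f g h : C.P k X Y n} (h1 : C.Htp f g) (h2 : C.Htp g h) : C.Htp f h := by
  obtain ⟨u, hu⟩ := h1
  obtain ⟨v, hv⟩ := h2
  exact ⟨u + v, by rw [A.pd_add, C.dcast_add, ← hu, ← hv, sub_add_sub_cancel]⟩

lemma htp_of_eq {k : ℕ} {X : Fin k → C.Obj} {Y : C.Obj} {n : ℤ}
    (A : PTAxioms C) {f g : C.P k X Y n} (h : f = g) : C.Htp f g := by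
  subst h; exact C.htp_refl A f

lemma htp_dcast {k : ℕ} {X : Fin k → C.Obj} {Y : C.Obj} {m m' : ℤ} (h : m = m')
    {f g : C.P k X Y m} (hfg : C.Htp f g) : C.Htp (C.dcast h f) (C.dcast h g) := by
  subst h; exact hfg

lemma htp_ocast {k : ℕ} {X : Fin k → C.Obj} {Y Y' : C.Obj} (h : Y = Y') {m : ℤ}
    {f g : C.P k X Y m} (hfg : C.Htp f g) : C.Htp (C.ocast h f) (C.ocast h g) := by
  subst h; exact hfg

lemma pcast_zero {k k' : ℕ} (h : k = k') {X : Fin k → C.Obj} {X' : Fin k' → C.Obj}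
    {Y : C.Obj} {m : ℤ} (hX : ∀ a, X a = X' (Fin.cast h a)) :
    C.pcast h (0 : C.P k X Y m) hX = 0 := by
  have h2 := C.pcast_add h hX (0 : C.P k X Y m) 0
  rw [add_zero] at h2
  exact left_eq_add.mp h2

end HtpBasic

section Leibniz

private lemma add_eq_helper {M : Type*} [AddZeroClass M] {a b s : M}
    (hs : s = 0) (hab : a = b) : a + s = b := by rw [hs, add_zero, hab]

lemma pcomp_pd_left (A : PTAxioms C) {l p : ℕ} (π : Fin p → Fin l)
    (hπ : Function.Surjective π) {X : Fin p → C.Obj} {Y : Fin l → C.Obj}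
    {Z : C.Obj} {m : ℤ} {n : Fin l → ℤ} (f : C.P l Y Z m)
    (g : ∀ i, C.P (fiberCard π i) (X ∘ fiberEmb π i) (Y i) (n i))
    (hg : ∀ i, C.pd (g i) = 0) :
    C.pd (C.pcomp π hπ f g) = C.dcast (by ring) (C.pcomp π hπ (C.pd f) g) := by
  rw [A.pcomp_pd π hπ f g]
  refine add_eq_helper ?_ rfl
  exact Finset.sum_eq_zero fun i _ => by
    rw [C.pcomp_zero_slot A π hπ _ _ i (by rw [dif_pos rfl, hg i, C.dcast_zero]),
      C.dcast_zero, smul_zero]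

lemma pd_pcomp_closed (A : PTAxioms C) {l p : ℕ} (π : Fin p → Fin l)
    (hπ : Function.Surjective π) {X : Fin p → C.Obj} {Y : Fin l → C.Obj}
    {Z : C.Obj} {m : ℤ} {n : Fin l → ℤ} (f : C.P l Y Z m)
    (g : ∀ i, C.P (fiberCard π i) (X ∘ fiberEmb π i) (Y i) (n i))
    (hf : C.pd f = 0) (hg : ∀ i, C.pd (g i) = 0) :
    C.pd (C.pcomp π hπ f g) = 0 := by
  rw [C.pcomp_pd_left A π hπ f g hg, hf, C.pcomp_zero_left A, C.dcast_zero]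

lemma htp_pcomp_left (A : PTAxioms C) {l p : ℕ} (π : Fin p → Fin l)
    (hπ : Function.Surjective π) {X : Fin p → C.Obj} {Y : Fin l → C.Obj}
    {Z : C.Obj} {m : ℤ} {n : Fin l → ℤ} {f f' : C.P l Y Z m}
    (g : ∀ i, C.P (fiberCard π i) (X ∘ fiberEmb π i) (Y i) (n i))
    (hg : ∀ i, C.pd (g i) = 0) (hff' : C.Htp f f') :
    C.Htp (C.pcomp π hπ f g) (C.pcomp π hπ f' g) := by
  obtain ⟨u, hu⟩ := hff'
  refine ⟨C.dcast (by ring) (C.pcomp π hπ u g), ?_⟩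
  rw [← C.pcomp_sub_left A π hπ f f' g, hu, C.pcomp_dcast_left, C.pd_dcast,
    C.pcomp_pd_left A π hπ u g hg, C.dcast_dcast, C.dcast_dcast]

end Leibniz

end PTData
namespace PTData

variable (C : PTData.{u, v})

lemma pcomp_heq_deg {l p : ℕ} (π : Fin p → Fin l) (hπ : Function.Surjective π)
    {X : Fin p → C.Obj} {Y : Fin l → C.Obj} {Z : C.Obj} {m₁ m₂ : ℤ} (hm : m₁ = m₂)
    {n₁ n₂ : Fin l → ℤ} (hn : ∀ i, n₁ i = n₂ i)
    {f₁ : C.P l Y Z m₁} {f₂ : C.P l Y Z m₂} (hf : HEq f₁ f₂)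
    {g₁ : ∀ i, C.P (fiberCard π i) (X ∘ fiberEmb π i) (Y i) (n₁ i)}
    {g₂ : ∀ i, C.P (fiberCard π i) (X ∘ fiberEmb π i) (Y i) (n₂ i)}
    (hg : ∀ i, HEq (g₁ i) (g₂ i)) :
    HEq (C.pcomp π hπ f₁ g₁) (C.pcomp π hπ f₂ g₂) := by
  subst hm
  have hnn : n₁ = n₂ := funext hn
  subst hnn
  rw [eq_of_heq hf]
  have hgg : g₁ = g₂ := funext fun i => eq_of_heq (hg i)
  rw [hgg]

lemma htp_pcomp_update (A : PTAxioms C) {l p : ℕ} (π : Fin p → Fin l)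
    (hπ : Function.Surjective π) {X : Fin p → C.Obj} {Y : Fin l → C.Obj}
    {Z : C.Obj} {m : ℤ} {n : Fin l → ℤ} (f : C.P l Y Z m) (hf : C.pd f = 0)
    (g : ∀ i, C.P (fiberCard π i) (X ∘ fiberEmb π i) (Y i) (n i))
    (hg : ∀ j, C.pd (g j) = 0) (i₀ : Fin l)
    {x y : C.P (fiberCard π i₀) (X ∘ fiberEmb π i₀) (Y i₀) (n i₀)}
    (hxy : C.Htp x y) :
    C.Htp (C.pcomp π hπ f (Function.update g i₀ x))
      (C.pcomp π hπ f (Function.update g i₀ y)) := by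
  obtain ⟨u, hu⟩ := hxy
  classical
  have h0 : n i₀ - 1 = Function.update n i₀ (n i₀ - 1) i₀ :=
    (Function.update_self i₀ (n i₀ - 1) n).symm
  have hbn : ∀ j, j ≠ i₀ → n j = Function.update n i₀ (n i₀ - 1) j :=
    fun j h => (Function.update_of_ne h _ _).symm
  set gU : ∀ j, C.P (fiberCard π j) (X ∘ fiberEmb π j) (Y j)
      (Function.update n i₀ (n i₀ - 1) j) :=
    Function.update (fun j => if h : j = i₀ then 0 else C.dcast (hbn j h) (g j))
      i₀ (C.dcast h0 u) with hgUdef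
  have hgU0 : gU i₀ = C.dcast h0 u := by
    rw [hgUdef]
    exact Function.update_self i₀ _ _
  have hgUne : ∀ j (h : j ≠ i₀), gU j = C.dcast (hbn j h) (g j) := by
    intro j h
    rw [hgUdef]
    exact (Function.update_of_ne h _ _).trans (dif_neg h)
  have key := A.pcomp_pd π hπ (n := Function.update n i₀ (n i₀ - 1)) f gU
  rw [hf, C.pcomp_zero_left A, C.dcast_zero, zero_add] at key
  replace key := key.trans (Finset.sum_eq_single_of_mem i₀ (Finset.mem_univ i₀) (by
    intro b _ hb
    have hpdb : C.pd (gU b) = 0 := by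
      rw [hgUne b hb, C.pd_dcast, hg b, C.dcast_zero]
    rw [C.pcomp_zero_slot A π hπ _ _ b (by rw [dif_pos rfl, hpdb, C.dcast_zero]),
      C.dcast_zero, smul_zero]))
  -- pointwise degree identification
  have hdeg : ∀ i, Function.update (Function.update n i₀ (n i₀ - 1)) i₀
      (Function.update n i₀ (n i₀ - 1) i₀ + 1) i = n i := by
    intro i
    rcases eq_or_ne i i₀ with rfl | h
    · simp
    · rw [Function.update_of_ne h, Function.update_of_ne h]
  have hdegs : m + ∑ i, Function.update (Function.update n i₀ (n i₀ - 1)) i₀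
      (Function.update n i₀ (n i₀ - 1) i₀ + 1) i = m + ∑ i, n i :=
    congrArg (m + ·) (Finset.sum_congr rfl (fun i _ => hdeg i))
  -- identification of the deformed composition with the difference
  have claim2 : C.dcast hdegs (C.pcomp π hπ
        (n := Function.update (Function.update n i₀ (n i₀ - 1)) i₀
          (Function.update n i₀ (n i₀ - 1) i₀ + 1)) f
        (fun i' =>
          if h : i' = i₀ then
            C.dcast (by subst h; simp) (C.pd (gU i'))
          else
            C.dcast (Function.update_of_ne h _ _).symm (gU i')))
      = C.pcomp π hπ f (Function.update g i₀ (x - y)) := by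
    refine C.dcast_eq_of_heq hdegs ?_
    refine C.pcomp_heq_deg π hπ rfl (fun i => hdeg i) HEq.rfl ?_
    intro i'
    by_cases h : i' = i₀
    · subst h
      refine HEq.trans (heq_of_eq (dif_pos rfl)) ?_
      refine (C.heq_dcast _ _).trans ?_
      rw [hgU0, C.pd_dcast, hu]
      refine (C.heq_dcast _ _).trans ?_
      exact ((heq_of_eq (Function.update_self i' _ g)).trans (C.heq_dcast _ _)).symm
    · refine HEq.trans (heq_of_eq (dif_neg h)) ?_
      refine (C.heq_dcast _ _).trans ?_
      rw [hgUne i' h]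
      refine (C.heq_dcast _ _).trans ?_
      exact (heq_of_eq (Function.update_of_ne h (x - y) g)).symm
  refine ⟨(Int.negOnePow (m + ∑ l' ∈ Finset.Iio i₀,
      Function.update n i₀ (n i₀ - 1) l') : ℤ) •
      C.dcast (by
        rw [Finset.sum_update_of_mem (Finset.mem_univ i₀),
          Finset.sum_eq_sum_sdiff_singleton_add (Finset.mem_univ i₀) n]
        ring) (C.pcomp π hπ f gU), ?_⟩
  rw [← C.pcomp_update_sub A π hπ f g i₀ x y, ← claim2, C.pd_smul A, C.dcast_smul,
    C.pd_dcast, key, C.dcast_dcast, C.dcast_smul, C.dcast_dcast, smul_smul,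
    ← Units.val_mul, Int.units_mul_self, Units.val_one, one_smul]

end PTData
namespace PTData

variable (C : PTData.{u, v})

lemma htp_pcomp_slots (A : PTAxioms C) {l p : ℕ} (π : Fin p → Fin l)
    (hπ : Function.Surjective π) {X : Fin p → C.Obj} {Y : Fin l → C.Obj}
    {Z : C.Obj} {m : ℤ} {n : Fin l → ℤ} (f : C.P l Y Z m) (hf : C.pd f = 0)
    {g g' : ∀ i, C.P (fiberCard π i) (X ∘ fiberEmb π i) (Y i) (n i)}
    (hg : ∀ i, C.pd (g i) = 0) (hg' : ∀ i, C.pd (g' i) = 0)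
    (hgg : ∀ i, C.Htp (g i) (g' i)) :
    C.Htp (C.pcomp π hπ f g) (C.pcomp π hπ f g') := by
  classical
  suffices H : ∀ s : Finset (Fin l),
      C.Htp (C.pcomp π hπ f g) (C.pcomp π hπ f (fun i => if i ∈ s then g' i else g i)) by
    have h2 := H Finset.univ
    simpa only [Finset.mem_univ, if_true] using h2
  intro s
  induction s using Finset.induction_on with
  | empty =>
    simpa only [Finset.notMem_empty, if_false] using C.htp_refl A (C.pcomp π hπ f g)
  | @insert a s hns ih =>
    have hmidpd : ∀ j, C.pd ((fun i => if i ∈ s then g' i else g i) j) = 0 := by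
      intro j; by_cases hj : j ∈ s <;> simp [hj, hg, hg']
    have hfun : (fun i => if i ∈ insert a s then g' i else g i)
        = Function.update (fun i => if i ∈ s then g' i else g i) a (g' a) := by
      funext j
      rcases eq_or_ne j a with rfl | h
      · rw [if_pos (Finset.mem_insert_self j s)]
        exact (Function.update_self j (g' j) (fun i => if i ∈ s then g' i else g i)).symm
      · rw [Function.update_of_ne h]
        simp [Finset.mem_insert, h]
    rw [hfun]
    refine C.htp_trans A ih ?_
    have hself : C.pcomp π hπ f (fun i => if i ∈ s then g' i else g i)
        = C.pcomp π hπ f (Function.update (fun i => if i ∈ s then g' i else g i) a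
            ((fun i => if i ∈ s then g' i else g i) a)) := by
      rw [Function.update_eq_self]
    rw [hself]
    refine C.htp_pcomp_update A π hπ f hf _ hmidpd a ?_
    simpa only [if_neg hns] using hgg a

end PTData
namespace PTData

variable (C : PTData.{u, v})

/-- Degree-0 composition. -/
def pz {l p : ℕ} (π : Fin p → Fin l) (hπ : Function.Surjective π)
    {X : Fin p → C.Obj} {Y : Fin l → C.Obj} {Z : C.Obj}
    (f : C.P l Y Z 0)
    (g : ∀ i, C.P (fiberCard π i) (X ∘ fiberEmb π i) (Y i) 0) : C.P p X Z 0 :=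
  C.dcast (by simp) (C.pcomp π hπ (n := fun _ => 0) f g)

/-- Degree-0 action of a `Hom` on a `P`-element. -/
def az {k : ℕ} (hk : 0 < k) {X : Fin k → C.Obj} {A B : C.Obj}
    (h : C.Hom A B 0) (f : C.P k X A 0) : C.P k X B 0 :=
  C.dcast (add_zero 0) (C.act1 hk h f)

lemma az_eq_pz {k : ℕ} (hk : 0 < k) {X : Fin k → C.Obj} {A B : C.Obj}
    (h : C.Hom A B 0) (f : C.P k X A 0) :
    C.az hk h f = C.pz (fun _ : Fin k => (0 : Fin 1))
      (fun b => ⟨⟨0, hk⟩, Subsingleton.elim _ _⟩) h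
      (fun i => C.pcast (fiberCard_const i).symm f
        (fun a => congrArg X (Fin.ext
          (((fiberEmb_const_val i (Fin.cast (fiberCard_const i).symm a)).trans
            (Fin.coe_cast _ a)).symm)))) := by
  unfold az act1 pz
  rw [C.dcast_dcast]

lemma pd_pz (A : PTAxioms C) {l p : ℕ} (π : Fin p → Fin l)
    (hπ : Function.Surjective π) {X : Fin p → C.Obj} {Y : Fin l → C.Obj}
    {Z : C.Obj} (f : C.P l Y Z 0)
    (g : ∀ i, C.P (fiberCard π i) (X ∘ fiberEmb π i) (Y i) 0)
    (hf : C.pd f = 0) (hg : ∀ i, C.pd (g i) = 0) :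
    C.pd (C.pz π hπ f g) = 0 := by
  unfold pz
  rw [C.pd_dcast, C.pd_pcomp_closed A π hπ f g hf hg, C.dcast_zero]

lemma htp_pz_left (A : PTAxioms C) {l p : ℕ} (π : Fin p → Fin l)
    (hπ : Function.Surjective π) {X : Fin p → C.Obj} {Y : Fin l → C.Obj}
    {Z : C.Obj} {f f' : C.P l Y Z 0}
    (g : ∀ i, C.P (fiberCard π i) (X ∘ fiberEmb π i) (Y i) 0)
    (hg : ∀ i, C.pd (g i) = 0) (hff' : C.Htp f f') :
    C.Htp (C.pz π hπ f g) (C.pz π hπ f' g) :=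
  C.htp_dcast _ (C.htp_pcomp_left A π hπ g hg hff')

lemma htp_pz_slots (A : PTAxioms C) {l p : ℕ} (π : Fin p → Fin l)
    (hπ : Function.Surjective π) {X : Fin p → C.Obj} {Y : Fin l → C.Obj}
    {Z : C.Obj} (f : C.P l Y Z 0) (hf : C.pd f = 0)
    {g g' : ∀ i, C.P (fiberCard π i) (X ∘ fiberEmb π i) (Y i) 0}
    (hg : ∀ i, C.pd (g i) = 0) (hg' : ∀ i, C.pd (g' i) = 0)
    (hgg : ∀ i, C.Htp (g i) (g' i)) :
    C.Htp (C.pz π hπ f g) (C.pz π hπ f g') :=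
  C.htp_dcast _ (C.htp_pcomp_slots A π hπ f hf hg hg' hgg)

lemma pz_heq {l₁ l₂ p₁ p₂ : ℕ} (hl : l₁ = l₂) (hp : p₁ = p₂)
    {π₁ : Fin p₁ → Fin l₁} {π₂ : Fin p₂ → Fin l₂}
    (h₁ : Function.Surjective π₁) (h₂ : Function.Surjective π₂)
    (hπ : ∀ a, Fin.cast hl (π₁ a) = π₂ (Fin.cast hp a))
    {X₁ : Fin p₁ → C.Obj} {X₂ : Fin p₂ → C.Obj} (hX : ∀ a, X₁ a = X₂ (Fin.cast hp a))
    {Y₁ : Fin l₁ → C.Obj} {Y₂ : Fin l₂ → C.Obj} (hY : ∀ i, Y₁ i = Y₂ (Fin.cast hl i))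
    {Z₁ Z₂ : C.Obj} (hZ : Z₁ = Z₂)
    {f₁ : C.P l₁ Y₁ Z₁ 0} {f₂ : C.P l₂ Y₂ Z₂ 0} (hf : HEq f₁ f₂)
    {g₁ : ∀ i, C.P (fiberCard π₁ i) (X₁ ∘ fiberEmb π₁ i) (Y₁ i) 0}
    {g₂ : ∀ i, C.P (fiberCard π₂ i) (X₂ ∘ fiberEmb π₂ i) (Y₂ i) 0}
    (hg : ∀ i, HEq (g₁ i) (g₂ (Fin.cast hl i))) :
    HEq (C.pz π₁ h₁ f₁ g₁) (C.pz π₂ h₂ f₂ g₂) := by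
  unfold pz
  exact (C.heq_dcast _ _).trans ((C.pcomp_heq hl hp h₁ h₂ hπ hX hY hZ rfl
    (n₁ := fun _ => 0) (n₂ := fun _ => 0) (fun i => rfl) hf hg).trans
    (C.heq_dcast _ _).symm)

lemma htp_pcast (A : PTAxioms C) {k k' : ℕ} (h : k = k') {X : Fin k → C.Obj}
    {X' : Fin k' → C.Obj} {Y : C.Obj} {m : ℤ} {f g : C.P k X Y m}
    (hX : ∀ a, X a = X' (Fin.cast h a)) (hfg : C.Htp f g) :
    C.Htp (C.pcast h f hX) (C.pcast h g hX) := by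
  refine C.htp_congr h hX rfl rfl ?_ ?_ hfg
  · exact (C.heq_pcast h f hX).symm
  · exact (C.heq_pcast h g hX).symm

lemma pd_pcast_zero {k k' : ℕ} (h : k = k') {X : Fin k → C.Obj}
    {X' : Fin k' → C.Obj} {Y : C.Obj} {m : ℤ} (f : C.P k X Y m)
    (hX : ∀ a, X a = X' (Fin.cast h a)) (hf : C.pd f = 0) :
    C.pd (C.pcast h f hX) = 0 := by
  rw [← C.pcast_pd, hf, C.pcast_zero]

lemma pd_az (A : PTAxioms C) {k : ℕ} (hk : 0 < k) {X : Fin k → C.Obj}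
    {A' B : C.Obj} (h : C.Hom A' B 0) (f : C.P k X A' 0)
    (hh : C.pd h = 0) (hf : C.pd f = 0) : C.pd (C.az hk h f) = 0 := by
  rw [C.az_eq_pz hk h f]
  exact C.pd_pz A _ _ h _ hh (fun i => C.pd_pcast_zero _ f _ hf)

lemma htp_az_left (A : PTAxioms C) {k : ℕ} (hk : 0 < k) {X : Fin k → C.Obj}
    {A' B : C.Obj} {h h' : C.Hom A' B 0} (f : C.P k X A' 0)
    (hf : C.pd f = 0) (hhh' : C.Htp h h') :
    C.Htp (C.az hk h f) (C.az hk h' f) := by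
  rw [C.az_eq_pz hk h f, C.az_eq_pz hk h' f]
  exact C.htp_pz_left A _ _ _ (fun i => C.pd_pcast_zero _ f _ hf) hhh'

lemma htp_az_right (A : PTAxioms C) {k : ℕ} (hk : 0 < k) {X : Fin k → C.Obj}
    {A' B : C.Obj} (h : C.Hom A' B 0) {x y : C.P k X A' 0}
    (hh : C.pd h = 0) (hx : C.pd x = 0) (hy : C.pd y = 0) (hxy : C.Htp x y) :
    C.Htp (C.az hk h x) (C.az hk h y) := by
  rw [C.az_eq_pz hk h x, C.az_eq_pz hk h y]
  refine C.htp_pz_slots A _ _ h hh (fun i => C.pd_pcast_zero _ x _ hx)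
    (fun i => C.pd_pcast_zero _ y _ hy) (fun i => C.htp_pcast A _ _ hxy)

lemma az_dcast_hom {k : ℕ} (hk : 0 < k) {X : Fin k → C.Obj} {A' B : C.Obj}
    {m : ℤ} (hm : m = 0) (h : C.Hom A' B m) (f : C.P k X A' 0) :
    C.az hk (C.dcast hm h) f = C.dcast (by rw [hm, zero_add]) (C.act1 hk h f) := by
  subst hm; rfl

lemma az_ocast_hom {k : ℕ} (hk : 0 < k) {X : Fin k → C.Obj} {A' B B' : C.Obj}
    (hB : B = B') (h : C.Hom A' B 0) (f : C.P k X A' 0) :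
    C.az hk (C.ocast hB h) f = C.ocast hB (C.az hk h f) := by
  subst hB; rfl

end PTData
section FiberHelpers

lemma heq_fun_congr {α : Sort*} {γ : α → Sort*} (g : ∀ a, γ a) {a a' : α}
    (h : a = a') : HEq (g a) (g a') := by subst h; rfl

lemma fiberEmb_const_eq {k : ℕ} (i : Fin 1)
    (h : k = fiberCard (fun _ : Fin k => (0 : Fin 1)) i) (a : Fin k) :
    fiberEmb (fun _ : Fin k => (0 : Fin 1)) i (Fin.cast h a) = a := by
  apply Fin.ext
  exact fiberEmb_const_val i (Fin.cast h a)

lemma fiberEmb_comp_const_eq {l p : ℕ} (π : Fin p → Fin l) (i : Fin 1)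
    (hp2 : p = fiberCard ((fun _ : Fin l => (0 : Fin 1)) ∘ π) i) (a : Fin p) :
    fiberEmb ((fun _ : Fin l => (0 : Fin 1)) ∘ π) i (Fin.cast hp2 a) = a := by
  apply Fin.ext
  exact fiberEmb_const_val i (Fin.cast hp2 a)

lemma fiberMap_const_eq {l p : ℕ} (π : Fin p → Fin l) (i : Fin 1)
    (hl2 : l = fiberCard (fun _ : Fin l => (0 : Fin 1)) i)
    (hp2 : p = fiberCard ((fun _ : Fin l => (0 : Fin 1)) ∘ π) i) (a : Fin p) :
    Fin.cast hl2 (π a)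
      = fiberMap (fun _ : Fin l => (0 : Fin 1)) π i (Fin.cast hp2 a) := by
  apply Fin.ext
  have e1 := fiberEmb_fiberMap (fun _ : Fin l => (0 : Fin 1)) π i (Fin.cast hp2 a)
  rw [fiberEmb_comp_const_eq π i hp2 a] at e1
  have e2 : ((fiberEmb (fun _ : Fin l => (0 : Fin 1)) i
      (fiberMap (fun _ : Fin l => (0 : Fin 1)) π i (Fin.cast hp2 a)) : Fin l) : ℕ)
      = ((fiberMap (fun _ : Fin l => (0 : Fin 1)) π i (Fin.cast hp2 a) :
          Fin (fiberCard (fun _ : Fin l => (0 : Fin 1)) i)) : ℕ) :=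
    fiberEmb_const_val i _
  show ((π a : Fin l) : ℕ) = _
  rw [← congrArg Fin.val e1, e2]

end FiberHelpers

namespace PTData

variable (C : PTData.{u, v})

lemma pz_assoc (A : PTAxioms C) {l p q : ℕ} (π : Fin p → Fin l)
    (hπ : Function.Surjective π) (π' : Fin q → Fin p) (hπ' : Function.Surjective π')
    {W : Fin q → C.Obj} {X : Fin p → C.Obj} {Y : Fin l → C.Obj} {Z : C.Obj}
    (f : C.P l Y Z 0)
    (g : ∀ i, C.P (fiberCard π i) (X ∘ fiberEmb π i) (Y i) 0)
    (h : ∀ j, C.P (fiberCard π' j) (W ∘ fiberEmb π' j) (X j) 0) :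
    C.pz π' hπ' (C.pz π hπ f g) h
      = C.pz (π ∘ π') (hπ.comp hπ') f
          (fun i => C.pz (fiberMap π π' i) (fiberMap_surjective π π' hπ' i) (g i)
            (fun b => C.pcast (hcard_gen π π' i b) (h (fiberEmb π i b))
              (fun a => congrArg W (hemb_gen π π' i b a)))) := by
  have base := A.passoc π hπ π' hπ' (m := 0) (n := fun _ => 0) (q' := fun _ => 0)
    f g h (hcard_gen π π') (hemb_gen π π')
  simp only [mul_zero, Finset.sum_const_zero, Int.negOnePow_zero, Units.val_one,
    one_smul] at base
  unfold pz
  rw [C.pcomp_dcast_left, C.dcast_dcast]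
  refine C.dcast_eq_dcast_of_heq _ _ ?_
  refine HEq.trans ((heq_of_eq base).trans (C.heq_dcast _ _)).symm ?_
  exact C.pcomp_heq_deg _ _ rfl (fun i => by simp) HEq.rfl
    (fun i => (C.heq_dcast _ _).symm)

lemma az_pz (A : PTAxioms C) {l p : ℕ} (hp : 0 < p) (hl : 0 < l)
    (π : Fin p → Fin l) (hπS : Function.Surjective π)
    {X : Fin p → C.Obj} {Y : Fin l → C.Obj} {A' B : C.Obj}
    (F : C.Hom A' B 0) (u : C.P l Y A' 0)
    (g : ∀ i, C.P (fiberCard π i) (X ∘ fiberEmb π i) (Y i) 0) :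
    C.az hp F (C.pz π hπS u g) = C.pz π hπS (C.az hl F u) g := by
  rw [C.az_eq_pz hp F (C.pz π hπS u g), C.az_eq_pz hl F u,
    C.pz_assoc A (fun _ : Fin l => (0 : Fin 1))
      (fun b => ⟨⟨0, hl⟩, Subsingleton.elim _ _⟩) π hπS F _ g]
  refine eq_of_heq (C.pz_heq rfl rfl _ _ (fun a => Subsingleton.elim _ _)
    (fun a => rfl) (fun i => rfl) rfl HEq.rfl ?_)
  intro i
  refine (C.heq_pcast _ _ _).trans ?_
  refine C.pz_heq (fiberCard_const i).symm (fiberCard_const i).symm _ _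
    (fun a => fiberMap_const_eq π i (fiberCard_const i).symm (fiberCard_const i).symm a)
    (fun a => (congrArg X (fiberEmb_comp_const_eq π i (fiberCard_const i).symm a)).symm)
    (fun b => (congrArg Y (fiberEmb_const_eq i (fiberCard_const i).symm b)).symm)
    rfl (C.heq_pcast _ _ _).symm ?_
  intro b
  exact ((heq_fun_congr g (fiberEmb_const_eq i (fiberCard_const i).symm b)).symm).trans
    (C.heq_pcast _ _ _).symm

lemma hcomp_az {A' B D : C.Obj} (F2 : C.Hom B D 0) (F1 : C.Hom A' B 0) :
    C.dcast (add_zero 0) (C.hcomp F2 F1) = C.az Nat.one_pos F2 F1 := rfl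

lemma az_az (A : PTAxioms C) {k : ℕ} (hk : 0 < k) {X : Fin k → C.Obj}
    {A' B D : C.Obj} (F2 : C.Hom B D 0) (F1 : C.Hom A' B 0) (x : C.P k X A' 0) :
    C.az hk (C.az Nat.one_pos F2 F1) x = C.az hk F2 (C.az hk F1 x) := by
  rw [C.az_eq_pz hk (C.az Nat.one_pos F2 F1) x, C.az_eq_pz hk F1 x]
  exact (C.az_pz A hk Nat.one_pos _ _ F2 F1 _).symm

end PTData
namespace PTData

variable (C : PTData.{u, v})

lemma az_heq {k₁ k₂ : ℕ} (hk : k₁ = k₂) (h₁ : 0 < k₁) (h₂ : 0 < k₂)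
    {X₁ : Fin k₁ → C.Obj} {X₂ : Fin k₂ → C.Obj} (hX : ∀ a, X₁ a = X₂ (Fin.cast hk a))
    {A₁ A₂ B₁ B₂ : C.Obj} (hA : A₁ = A₂) (hB : B₁ = B₂)
    {h : C.Hom A₁ B₁ 0} {h' : C.Hom A₂ B₂ 0} (hh : HEq h h')
    {f : C.P k₁ X₁ A₁ 0} {f' : C.P k₂ X₂ A₂ 0} (hf : HEq f f') :
    HEq (C.az h₁ h f) (C.az h₂ h' f') := by
  subst hk; subst hA; subst hB
  have hXX : X₁ = X₂ := funext fun a => hX a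
  subst hXX
  rw [eq_of_heq hh, eq_of_heq hf]

lemma pz_unary {l r : ℕ} (σ : Fin r → Fin l) (hσ : Function.Surjective σ)
    {X : Fin r → C.Obj} {W1 Z2 : Fin l → C.Obj} (i : Fin l)
    (F : ∀ j, C.Hom (W1 j) (Z2 j) 0)
    (h : ∀ j, C.P (fiberCard σ j) (X ∘ fiberEmb σ j) (W1 j) 0)
    (hpos : 0 < fiberCard σ i) :
    C.pz (X := X ∘ fiberEmb ((id : Fin l → Fin l) ∘ σ) i)
      (fiberMap (id : Fin l → Fin l) σ i)
      (fiberMap_surjective (id : Fin l → Fin l) σ hσ i)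
      (C.pcast (fiberCard_id i).symm (F i)
        (fun a => congrArg W1 (fiberEmb_id i (Fin.cast (fiberCard_id i).symm a)).symm))
      (fun b => C.pcast (hcard_gen (id : Fin l → Fin l) σ i b)
        (h (fiberEmb (id : Fin l → Fin l) i b))
        (fun a => congrArg X (hemb_gen (id : Fin l → Fin l) σ i b a)))
      = C.az hpos (F i) (h i) := by
  rw [C.az_eq_pz]
  refine eq_of_heq (C.pz_heq (fiberCard_id i) rfl _ _
    (fun a => Subsingleton.elim _ _)
    (fun a => rfl)
    (fun b => congrArg W1 (fiberEmb_id i b))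
    rfl
    ((C.heq_pcast _ _ _).trans HEq.rfl)
    ?_)
  intro b
  exact ((C.heq_pcast _ _ _).trans
    (heq_fun_congr h (fiberEmb_id i b))).trans (C.heq_pcast _ _ _).symm

lemma pd_tidF (R : PTRep C) {k : ℕ} (hk : 0 < k) (X : Fin k → C.Obj) :
    C.pd (tidF R hk X) = 0 :=
  C.pd_pcast_zero _ _ _ (R.tid_cycle _)

lemma tidF_heq (R : PTRep C) {k₁ k₂ : ℕ} (hk : k₁ = k₂) (h₁ : 0 < k₁)
    (h₂ : 0 < k₂) {X₁ : Fin k₁ → C.Obj} {X₂ : Fin k₂ → C.Obj}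
    (hX : ∀ a, X₁ a = X₂ (Fin.cast hk a)) :
    HEq (tidF R h₁ X₁) (tidF R h₂ X₂) := by
  subst hk
  have hXX : X₁ = X₂ := funext fun a => hX a
  subst hXX
  rfl

lemma pd_epsElt (A : PTAxioms C) (R : PTRep C) {l p : ℕ} (hp : 0 < p)
    (π : Fin p → Fin l) (hπ : Function.Surjective π) (X : Fin p → C.Obj) :
    C.pd (epsElt C R hp π hπ X) = 0 :=
  C.pd_pz A π hπ _ _ (C.pd_tidF R _ _) (fun i => C.pd_tidF R _ _)

end PTData
/-! ## Statement 3

For a representable pseudo-tensor structure and composable surjections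
`K →π' J →π I`, the canonical morphisms satisfy
`ε_π ∘ ε_{π'} = (⊗ᵢ ε_{π'ᵢ}) ∘ ε_{ππ'}` in `H⁰C`. -/

open PTData

set_option maxHeartbeats 2000000 in
/-- Let `P^C` be a representable pseudo-tensor structure on
a DG category `C`.  For composable surjections of finite sets
`K →π' J →π I` (with `J_i = π⁻¹(i)`, `K_j = π'⁻¹(j)`, `K_i = (ππ')⁻¹(i)`,
`π'_i = π'|_{K_i} : K_i ↠ J_i` realized as `fiberMap π π' i`), the diagram
`ε_π ∘ ε_{π'} = (⊗_{i∈I} ε_{π'_i}) ∘ ε_{ππ'}` commutes as morphisms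
`⊗_{k∈K}X_k → ⊗ᵢ(⊗_{j∈Jᵢ}(⊗_{k∈K_j}X_k))` in `H⁰C`. -/
theorem eps_transitivity
    (C : PTData.{u, v}) (A : PTAxioms C) (R : PTRep C)
    {l q r : ℕ} (hl : 0 < l) (hq : 0 < q) (hr : 0 < r)
    (π : Fin q → Fin l) (hπ : Function.Surjective π)
    (π' : Fin r → Fin q) (hπ' : Function.Surjective π')
    (X : Fin r → C.Obj)
    -- `F1 = ε_{π'} : ⊗_K X_k → ⊗_J (⊗_{K_j} X_k)`
    (F1 : C.Hom (tobF R hr X)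
      (tobF R hq (fun j => tobF R (fiberCard_pos π' hπ' j) (X ∘ fiberEmb π' j))) 0)
    (hF1 : IsEps C R hr π' hπ' X F1)
    -- `F2 = ε_π : ⊗_J (⊗_{K_j} X) → ⊗_I (⊗_{J_i} (⊗_{K_j} X))`
    (F2 : C.Hom
      (tobF R hq (fun j => tobF R (fiberCard_pos π' hπ' j) (X ∘ fiberEmb π' j)))
      (tobF R hl (fun i => tobF R (fiberCard_pos π hπ i)
        ((fun j => tobF R (fiberCard_pos π' hπ' j) (X ∘ fiberEmb π' j))
          ∘ fiberEmb π i))) 0)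
    (hF2 : IsEps C R hq π hπ
      (fun j => tobF R (fiberCard_pos π' hπ' j) (X ∘ fiberEmb π' j)) F2)
    -- `F3 = ε_{ππ'} : ⊗_K X → ⊗_I (⊗_{K_i} X)`
    (F3 : C.Hom (tobF R hr X)
      (tobF R hl (fun i => tobF R (fiberCard_pos (π ∘ π') (hπ.comp hπ') i)
        (X ∘ fiberEmb (π ∘ π') i))) 0)
    (hF3 : IsEps C R hr (π ∘ π') (hπ.comp hπ') X F3)
    -- `F4 i = ε_{π'_i} : ⊗_{K_i} X → ⊗_{J_i} (⊗_{K_j} X)`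
    (F4 : ∀ i : Fin l, C.Hom
      (tobF R (fiberCard_pos (π ∘ π') (hπ.comp hπ') i) (X ∘ fiberEmb (π ∘ π') i))
      (tobF R (fiberCard_pos π hπ i)
        (fun b => tobF R
          (fiberCard_pos (fiberMap π π' i) (fiberMap_surjective π π' hπ' i) b)
          ((X ∘ fiberEmb (π ∘ π') i) ∘ fiberEmb (fiberMap π π' i) b))) 0)
    (hF4 : ∀ i, IsEps C R (fiberCard_pos (π ∘ π') (hπ.comp hπ') i)
      (fiberMap π π' i) (fiberMap_surjective π π' hπ' i)
      (X ∘ fiberEmb (π ∘ π') i) (F4 i))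
    -- `G = ⊗_{i∈I} ε_{π'_i}`
    (G : C.Hom
      (tobF R hl (fun i => tobF R (fiberCard_pos (π ∘ π') (hπ.comp hπ') i)
        (X ∘ fiberEmb (π ∘ π') i)))
      (tobF R hl (fun i => tobF R (fiberCard_pos π hπ i)
        (fun b => tobF R
          (fiberCard_pos (fiberMap π π' i) (fiberMap_surjective π π' hπ' i) b)
          ((X ∘ fiberEmb (π ∘ π') i) ∘ fiberEmb (fiberMap π π' i) b)))) 0)
    (hG : IsTenMap C R hl F4 G)
    -- identification of the two (canonically equal) iterated tensor objects
    (hobj : tobF R hl (fun i => tobF R (fiberCard_pos π hπ i)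
        (fun b => tobF R
          (fiberCard_pos (fiberMap π π' i) (fiberMap_surjective π π' hπ' i) b)
          ((X ∘ fiberEmb (π ∘ π') i) ∘ fiberEmb (fiberMap π π' i) b)))
      = tobF R hl (fun i => tobF R (fiberCard_pos π hπ i)
        ((fun j => tobF R (fiberCard_pos π' hπ' j) (X ∘ fiberEmb π' j))
          ∘ fiberEmb π i))) :
    C.Htp (C.dcast (add_zero 0) (C.hcomp F2 F1))
      (C.ocast hobj (C.dcast (add_zero 0) (C.hcomp G F3))) := by
  classical
  obtain ⟨hF1c, hF1h⟩ := hF1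
  obtain ⟨hF2c, hF2h⟩ := hF2
  obtain ⟨hF3c, hF3h⟩ := hF3
  obtain ⟨hGc, hF4c, hGh⟩ := hG
  -- closedness of the two composite morphisms
  have hLc : C.pd (C.dcast (add_zero 0) (C.hcomp F2 F1)) = 0 := by
    rw [C.hcomp_az]
    exact C.pd_az A Nat.one_pos F2 F1 hF2c hF1c
  have hRc0 : C.pd (C.dcast (add_zero 0) (C.hcomp G F3)) = 0 := by
    rw [C.hcomp_az]
    exact C.pd_az A Nat.one_pos G F3 hGc hF3c
  have hRc : C.pd (C.ocast hobj (C.dcast (add_zero 0) (C.hcomp G F3))) = 0 := by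
    rw [C.pd_ocast, hRc0, C.ocast_zero]
  -- the canonical pointwise identification of iterated tensor objects
  have hfam : ∀ (i : Fin l) (b : Fin (fiberCard π i)),
      tobF R (fiberCard_pos (fiberMap π π' i) (fiberMap_surjective π π' hπ' i) b)
        ((X ∘ fiberEmb (π ∘ π') i) ∘ fiberEmb (fiberMap π π' i) b)
      = tobF R (fiberCard_pos π' hπ' (fiberEmb π i b))
        (X ∘ fiberEmb π' (fiberEmb π i b)) := fun i b =>
    (tobF_congr R _ _ (hcard_gen π π' i b).symm
      (fun a => (congrArg X (hemb_gen π π' i b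
        (Fin.cast (hcard_gen π π' i b).symm a))).symm))
  have hYZ : ∀ i : Fin l,
      tobF R (fiberCard_pos π hπ i)
        (fun b => tobF R (fiberCard_pos (fiberMap π π' i)
            (fiberMap_surjective π π' hπ' i) b)
          ((X ∘ fiberEmb (π ∘ π') i) ∘ fiberEmb (fiberMap π π' i) b))
      = tobF R (fiberCard_pos π hπ i)
        ((fun j => tobF R (fiberCard_pos π' hπ' j) (X ∘ fiberEmb π' j))
          ∘ fiberEmb π i) := fun i =>
    tobF_congr R _ _ rfl (fun b => hfam i b)
  -- the main homotopy, over `Fin r`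
  have hmain : C.Htp
      (C.az hr (C.dcast (add_zero 0) (C.hcomp F2 F1)) (tidF R hr X))
      (C.az hr (C.ocast hobj (C.dcast (add_zero 0) (C.hcomp G F3))) (tidF R hr X)) := by
    have e1 : C.az hr (C.dcast (add_zero 0) (C.hcomp F2 F1)) (tidF R hr X)
        = C.az hr F2 (C.az hr F1 (tidF R hr X)) := by
      rw [C.hcomp_az, C.az_az A]
    have e2 : C.az hr (C.ocast hobj (C.dcast (add_zero 0) (C.hcomp G F3))) (tidF R hr X)
        = C.ocast hobj (C.az hr G (C.az hr F3 (tidF R hr X))) := by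
      rw [C.az_ocast_hom, C.hcomp_az, C.az_az A]
    refine C.htp_trans A
      (g := C.pz (π ∘ π') (hπ.comp hπ')
        (tidF R (Fin.pos (π ⟨0, hq⟩)) (fun i => tobF R (fiberCard_pos π hπ i)
          ((fun j => tobF R (fiberCard_pos π' hπ' j) (X ∘ fiberEmb π' j))
            ∘ fiberEmb π i)))
        (fun i => C.pz (X := X ∘ fiberEmb (π ∘ π') i) (fiberMap π π' i)
          (fiberMap_surjective π π' hπ' i)
          (tidF R (fiberCard_pos π hπ i)
            ((fun j => tobF R (fiberCard_pos π' hπ' j) (X ∘ fiberEmb π' j))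
              ∘ fiberEmb π i))
          (fun b => C.pcast (hcard_gen π π' i b)
            (tidF R (fiberCard_pos π' hπ' (fiberEmb π i b))
              (X ∘ fiberEmb π' (fiberEmb π i b)))
            (fun a => congrArg X (hemb_gen π π' i b a)))))
      ?_ (C.htp_symm A ?_)
    · -- left chain
      refine C.htp_trans A (C.htp_of_eq A e1) ?_
      refine C.htp_trans A (C.htp_az_right A hr F2 hF2c
        (C.pd_az A hr F1 _ hF1c (C.pd_tidF R hr X))
        (C.pd_epsElt A R hr π' hπ' X) hF1h) ?_
      refine C.htp_trans A (C.htp_of_eq A (C.az_pz A hr hq π' hπ' F2 _ _)) ?_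
      refine C.htp_trans A (C.htp_pz_left A π' hπ' _
        (fun j => C.pd_tidF R _ _) hF2h) ?_
      exact C.htp_of_eq A (C.pz_assoc A π hπ π' hπ' _ _ _)
    · -- right chain
      refine C.htp_trans A (C.htp_of_eq A e2) ?_
      refine C.htp_trans A (C.htp_ocast hobj (C.htp_az_right A hr G hGc
        (C.pd_az A hr F3 _ hF3c (C.pd_tidF R hr X))
        (C.pd_epsElt A R hr (π ∘ π') (hπ.comp hπ') X) hF3h)) ?_
      refine C.htp_trans A (C.htp_ocast hobj
        (C.htp_of_eq A (C.az_pz A hr hl (π ∘ π') (hπ.comp hπ') G _ _))) ?_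
      refine C.htp_trans A (C.htp_ocast hobj (C.htp_pz_left A (π ∘ π') (hπ.comp hπ') _
        (fun i => C.pd_tidF R _ _) hGh)) ?_
      refine C.htp_trans A (C.htp_ocast hobj (C.htp_of_eq A
        (C.pz_assoc A (id : Fin l → Fin l) Function.surjective_id
          (π ∘ π') (hπ.comp hπ') _ _ _))) ?_
      refine C.htp_trans A (C.htp_ocast hobj (C.htp_pz_slots A _ _ _
        (C.pd_tidF R _ _)
        (g' := fun i => epsElt C R (fiberCard_pos (π ∘ π') (hπ.comp hπ') i)
          (fiberMap π π' i) (fiberMap_surjective π π' hπ' i)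
          (X ∘ fiberEmb (π ∘ π') i))
        (fun i => C.pd_pz A _ _ _ _ (C.pd_pcast_zero _ _ _ (hF4c i))
          (fun b => C.pd_pcast_zero _ _ _ (C.pd_tidF R _ _)))
        (fun i => C.pd_epsElt A R _ _ _ _)
        (fun i => C.htp_trans A (C.htp_of_eq A
          (C.pz_unary (π ∘ π') (hπ.comp hπ') i F4
            (fun j => tidF R (fiberCard_pos (π ∘ π') (hπ.comp hπ') j)
              (X ∘ fiberEmb (π ∘ π') j))
            (fiberCard_pos (π ∘ π') (hπ.comp hπ') i))) (hF4 i).2))) ?_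
      refine C.htp_of_eq A (C.ocast_eq_of_heq hobj ?_)
      refine C.pz_heq (π₁ := (id : Fin l → Fin l) ∘ (π ∘ π')) (π₂ := π ∘ π')
        rfl rfl _ _ (fun a => rfl) (fun a => rfl)
        (fun i => hYZ i) hobj (C.tidF_heq R rfl _ _ (fun i => hYZ i)) ?_
      intro i
      refine C.pz_heq (π₁ := fiberMap π π' i) (π₂ := fiberMap π π' i)
        rfl rfl _ _ (fun a => rfl) (fun a => rfl)
        (fun b => hfam i b) (hYZ i)
        (C.tidF_heq R rfl _ _ (fun b => hfam i b)) ?_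
      intro b
      exact (C.tidF_heq R (hcard_gen π π' i b).symm _ _
        (fun a => (congrArg X (hemb_gen π π' i b
          (Fin.cast (hcard_gen π π' i b).symm a))).symm)).trans
        (C.heq_pcast _ _ _).symm
  -- reduce to the universal cycle via representability
  refine R.lam_inj (fun a : Fin (r - 1 + 1) => X (Fin.cast (Nat.succ_pred_eq_of_pos hr) a))
    _ 0 _ _ hLc hRc ?_
  refine C.htp_congr (Nat.succ_pred_eq_of_pos hr).symm (fun a => rfl) rfl rfl ?_ ?_ hmain
  · exact C.az_heq (Nat.succ_pred_eq_of_pos hr).symm hr (Nat.succ_pos _)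
      (fun a => rfl) rfl rfl HEq.rfl (C.heq_pcast _ _ _)
  · exact C.az_heq (Nat.succ_pred_eq_of_pos hr).symm hr (Nat.succ_pos _)
      (fun a => rfl) rfl rfl HEq.rfl (C.heq_pcast _ _ _)
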